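/- Let a ∈ ℝ with −1 < a < 0. Then D_a(x) ≠ 0 for every x > 0, the function x ↦ R_a(x) is strictly decreasing on (0, ∞), R_a(1) = 1, R_a(x) → +∞ as x → 0⁺, and R_a(x) → −∞ as x → +∞. -/

import Mathlib

/-- The real restriction of the rational map `R_a` to the real line. -/
noncomputable def RaR (a x : ℝ) : ℝ :=
  (2*a*x^6 + (15 - a)*x^3 + (3 - a)) / (3*x^2*(5 - a + (1 + a)*x^3))

lemma den_pos_17 (a : ℝ) (ha1 : -1 < a) (ha0 : a < 0) {x : ℝ} (hx : 0 < x) :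
    0 < 3*x^2*(5 - a + (1 + a)*x^3) := by
  have h2 : 0 < x^2 := by positivity
  have h3 : 0 < x^3 := by positivity
  nlinarith [mul_pos (by linarith : (0:ℝ) < 1 + a) h3]

lemma hasDeriv_17 (a : ℝ) {x : ℝ} (hx : 0 < x) (hden : 3*x^2*(5 - a + (1 + a)*x^3) ≠ 0) :
    HasDerivAt (RaR a)
      ((6*x*(x^3-1)^2*(a*(1+a)*x^3 - (a^2-8*a+15))) / (3*x^2*(5 - a + (1 + a)*x^3))^2) x := by
  have hN : HasDerivAt (fun x : ℝ => 2*a*x^6 + (15 - a)*x^3 + (3 - a))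
      (2*a*((6:ℕ)*x^5) + (15 - a)*((3:ℕ)*x^2) + 0) x :=
    (((hasDerivAt_pow 6 x).const_mul (2*a)).add
      ((hasDerivAt_pow 3 x).const_mul (15 - a))).add (hasDerivAt_const x (3 - a))
  have hD : HasDerivAt (fun x : ℝ => 3*x^2*(5 - a + (1 + a)*x^3))
      (3*((2:ℕ)*x^1)*(5 - a + (1 + a)*x^3) + 3*x^2*(0 + (1 + a)*((3:ℕ)*x^2))) x := by
    have h1 : HasDerivAt (fun x : ℝ => 3*x^2) (3*((2:ℕ)*x^1)) x :=
      (hasDerivAt_pow 2 x).const_mul 3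
    have h2 : HasDerivAt (fun x : ℝ => 5 - a + (1 + a)*x^3) (0 + (1 + a)*((3:ℕ)*x^2)) x :=
      (hasDerivAt_const x (5 - a)).add ((hasDerivAt_pow 3 x).const_mul (1 + a))
    exact h1.mul h2
  have h := hN.div hD hden
  refine HasDerivAt.congr_deriv (f := RaR a) h ?_
  have hD2 : (3*x^2*(5 - a + (1 + a)*x^3))^2 ≠ 0 := pow_ne_zero 2 hden
  push_cast
  ring

/-- For real `a ∈ (-1,0)`, the denominator of `R_a` does not vanish on `(0,∞)`,
`R_a` is strictly decreasing on `(0,∞)`, fixes `1`, tends to `+∞` at `0⁺` and to `-∞`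
at `+∞`. -/
theorem stmt_17 (a : ℝ) (ha1 : -1 < a) (ha0 : a < 0) :
    (∀ x : ℝ, 0 < x → 3*x^2*(5 - a + (1 + a)*x^3) ≠ 0) ∧
    StrictAntiOn (RaR a) (Set.Ioi 0) ∧
    RaR a 1 = 1 ∧
    Filter.Tendsto (RaR a) (nhdsWithin 0 (Set.Ioi 0)) Filter.atTop ∧
    Filter.Tendsto (RaR a) Filter.atTop Filter.atBot := by
  have hdpos : ∀ x : ℝ, 0 < x → 0 < 3*x^2*(5 - a + (1 + a)*x^3) :=
    fun x hx => den_pos_17 a ha1 ha0 hx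
  have hdne : ∀ x : ℝ, 0 < x → 3*x^2*(5 - a + (1 + a)*x^3) ≠ 0 :=
    fun x hx => (hdpos x hx).ne'
  have hderiv_neg : ∀ x : ℝ, 0 < x → x ≠ 1 → deriv (RaR a) x < 0 := by
    intro x hx hx1
    rw [(hasDeriv_17 a hx (hdne x hx)).deriv]
    apply div_neg_of_neg_of_pos
    · have h1 : 0 < 6*x := by linarith
      have h2 : 0 < (x^3-1)^2 := by
        have hne : x^3 - 1 ≠ 0 := by
          intro h
          apply hx1
          nlinarith [sq_nonneg (x-1), sq_nonneg (x+1)]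
        positivity
      have h3 : a*(1+a)*x^3 - (a^2-8*a+15) < 0 := by
        have hx3 : 0 < x^3 := by positivity
        nlinarith [mul_pos (mul_pos (by linarith : (0:ℝ) < -a) (by linarith : (0:ℝ) < 1+a)) hx3]
      exact mul_neg_of_pos_of_neg (mul_pos h1 h2) h3
    · exact pow_pos (hdpos x hx) 2
  have hcont : ContinuousOn (RaR a) (Set.Ioi 0) := fun x hx =>
    ((hasDeriv_17 a hx (hdne x hx)).continuousAt).continuousWithinAt
  have hA1 : StrictAntiOn (RaR a) (Set.Ioc 0 1) := by
    apply strictAntiOn_of_deriv_neg (convex_Ioc 0 1)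
      (hcont.mono (fun x hx => hx.1))
    rw [interior_Ioc]
    exact fun x hx => hderiv_neg x hx.1 (ne_of_lt hx.2)
  have hA2 : StrictAntiOn (RaR a) (Set.Ici 1) := by
    apply strictAntiOn_of_deriv_neg (convex_Ici 1)
      (hcont.mono (fun x hx => Set.mem_Ioi.mpr (lt_of_lt_of_le zero_lt_one hx)))
    rw [interior_Ici]
    exact fun x hx => hderiv_neg x (lt_trans zero_lt_one hx) (ne_of_gt hx)
  refine ⟨hdne, ?_, ?_, ?_, ?_⟩
  · intro x hx y hy hxy
    simp only [Set.mem_Ioi] at hx hy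
    rcases le_or_gt y 1 with hy1 | hy1
    · exact hA1 ⟨hx, by linarith⟩ ⟨hy, hy1⟩ hxy
    · rcases le_or_gt 1 x with hx1 | hx1
      · exact hA2 hx1 hy1.le hxy
      · exact lt_trans (hA2 (Set.mem_Ici.mpr le_rfl) hy1.le hy1) (hA1 ⟨hx, hx1.le⟩ ⟨one_pos, le_rfl⟩ hx1)
  · rw [RaR, div_eq_one_iff_eq (hdne 1 one_pos)]
    ring
  · -- tendsto at 0⁺
    have hcN : Continuous (fun x : ℝ => 2*a*x^6 + (15 - a)*x^3 + (3 - a)) := by fun_prop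
    have hcD : Continuous (fun x : ℝ => 3*x^2*(5 - a + (1 + a)*x^3)) := by fun_prop
    have hN0 : Filter.Tendsto (fun x : ℝ => 2*a*x^6 + (15 - a)*x^3 + (3 - a))
        (nhdsWithin 0 (Set.Ioi 0)) (nhds (3 - a)) := by
      have h := (hcN.tendsto 0).mono_left (nhdsWithin_le_nhds (s := Set.Ioi (0:ℝ)))
      simpa using h
    have hD0 : Filter.Tendsto (fun x : ℝ => 3*x^2*(5 - a + (1 + a)*x^3))
        (nhdsWithin 0 (Set.Ioi 0)) (nhdsWithin 0 (Set.Ioi 0)) := by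
      apply tendsto_nhdsWithin_of_tendsto_nhds_of_eventually_within
      · have h := (hcD.tendsto 0).mono_left (nhdsWithin_le_nhds (s := Set.Ioi (0:ℝ)))
        simpa using h
      · filter_upwards [self_mem_nhdsWithin] with x hx
        exact hdpos x hx
    have hinv : Filter.Tendsto (fun x : ℝ => (3*x^2*(5 - a + (1 + a)*x^3))⁻¹)
        (nhdsWithin 0 (Set.Ioi 0)) Filter.atTop := tendsto_inv_nhdsGT_zero.comp hD0
    have := Filter.Tendsto.pos_mul_atTop (by linarith : (0:ℝ) < 3 - a) hN0 hinv
    refine this.congr (fun x => ?_)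
    rw [RaR, div_eq_mul_inv]
  · -- tendsto at +∞
    have hinv : Filter.Tendsto (fun x : ℝ => x⁻¹) Filter.atTop (nhds 0) :=
      tendsto_inv_atTop_zero
    have h3 : Filter.Tendsto (fun x : ℝ => (x⁻¹)^3) Filter.atTop (nhds 0) := by
      simpa using hinv.pow 3
    have h6 : Filter.Tendsto (fun x : ℝ => (x⁻¹)^6) Filter.atTop (nhds 0) := by
      simpa using hinv.pow 6
    have hnum : Filter.Tendsto (fun x : ℝ => 2*a + (15 - a)*(x⁻¹)^3 + (3 - a)*(x⁻¹)^6)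
        Filter.atTop (nhds (2*a)) := by
      have h := ((tendsto_const_nhds : Filter.Tendsto (fun _ : ℝ => 2*a) Filter.atTop (nhds (2*a))).add
        (h3.const_mul (15 - a))).add (h6.const_mul (3 - a))
      simpa using h
    have hdenl : Filter.Tendsto (fun x : ℝ => 3*(5 - a)*(x⁻¹)^3 + 3*(1 + a))
        Filter.atTop (nhds (3*(1 + a))) := by
      have h := (h3.const_mul (3*(5 - a))).add
        (tendsto_const_nhds : Filter.Tendsto (fun _ : ℝ => 3*(1+a)) Filter.atTop (nhds (3*(1+a))))
      simpa using h
    have h1a : (0:ℝ) < 3*(1 + a) := by linarith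
    have hg : Filter.Tendsto
        (fun x : ℝ => (2*a + (15 - a)*(x⁻¹)^3 + (3 - a)*(x⁻¹)^6) /
          (3*(5 - a)*(x⁻¹)^3 + 3*(1 + a)))
        Filter.atTop (nhds ((2*a) / (3*(1 + a)))) := hnum.div hdenl h1a.ne'
    have hC : (2*a) / (3*(1 + a)) < 0 :=
      div_neg_of_neg_of_pos (by linarith) h1a
    have hmain : Filter.Tendsto
        (fun x : ℝ => x * ((2*a + (15 - a)*(x⁻¹)^3 + (3 - a)*(x⁻¹)^6) /
          (3*(5 - a)*(x⁻¹)^3 + 3*(1 + a)))) Filter.atTop Filter.atBot :=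
      Filter.Tendsto.atTop_mul_neg hC Filter.tendsto_id hg
    refine hmain.congr' ?_
    filter_upwards [Filter.eventually_ge_atTop (1:ℝ)] with x hx
    have hx0 : (0:ℝ) < x := lt_of_lt_of_le zero_lt_one hx
    have hgden : 3*(5 - a)*(x⁻¹)^3 + 3*(1 + a) ≠ 0 := by
      have hi : 0 < x⁻¹ := inv_pos.mpr hx0
      have := pow_pos hi 3
      nlinarith
    rw [RaR, mul_div_assoc', div_eq_div_iff hgden (hdne x hx0)]
    field_simp
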